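/- Let b be a real number with 0 < b < 1/sqrt(2). Define F(alpha, m) := the integral from 0 to alpha of (1 - m*sin^2(theta))^(-1/2) d theta, and for t >= 0 near 0 set m(t) := 4*sin(t)/(1 + sin(t))^2, delta(t) := arcsin( sqrt(1 - b^2)*(1 - sin^2(t)) / (1 - (1 - b^2)*sin^2(t)) ), and rho(t) := (F(pi/2 - delta(t)/2, m(t)) - F(delta(t)/2, m(t))) / F(pi/2, m(t)). Then the first one-sided derivative of rho at t = 0 (the derivative of rho restricted to [0, epsilon)) equals 0, and the second one-sided derivative of rho at t = 0 equals b*sqrt(1 - b^2)/pi. -/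

import Mathlib

open Real MeasureTheory Set intervalIntegral

noncomputable section KolAux
namespace KolAux

/-- the point where the integrand is evaluated -/
def pp (d u : ℝ) : ℝ := Real.pi * u / 2 + (1 / 2 - u) * d

variable (mf mf1 mf2 df df1 df2 : ℝ → ℝ)

def BB (t u : ℝ) : ℝ := 1 - mf t * Real.sin (pp (df t) u) ^ 2

def QQ (t u : ℝ) : ℝ :=
  mf1 t * Real.sin (pp (df t) u) ^ 2 +
    2 * mf t * Real.sin (pp (df t) u) * Real.cos (pp (df t) u) * ((1 / 2 - u) * df1 t)

def QQ2 (t u : ℝ) : ℝ :=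
  mf2 t * Real.sin (pp (df t) u) ^ 2 +
    4 * mf1 t * Real.sin (pp (df t) u) * Real.cos (pp (df t) u) * ((1 / 2 - u) * df1 t) +
    2 * mf t * (Real.cos (pp (df t) u) ^ 2 - Real.sin (pp (df t) u) ^ 2) *
      ((1 / 2 - u) * df1 t) ^ 2 +
    2 * mf t * Real.sin (pp (df t) u) * Real.cos (pp (df t) u) * ((1 / 2 - u) * df2 t)

def gg (t u : ℝ) : ℝ := (Real.sqrt (BB mf df t u))⁻¹

def gg1 (t u : ℝ) : ℝ :=
  QQ mf mf1 df df1 t u / (2 * BB mf df t u * Real.sqrt (BB mf df t u))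

def gg2 (t u : ℝ) : ℝ :=
  QQ2 mf mf1 mf2 df df1 df2 t u / (2 * BB mf df t u * Real.sqrt (BB mf df t u)) +
    3 * QQ mf mf1 df df1 t u ^ 2 / (4 * BB mf df t u ^ 2 * Real.sqrt (BB mf df t u))

variable {mf mf1 mf2 df df1 df2}
variable {t u : ℝ}

lemma hasDerivAt_pp (hd : HasDerivAt df (df1 t) t) :
    HasDerivAt (fun t => pp (df t) u) ((1 / 2 - u) * df1 t) t := by
  simpa [pp] using (hd.const_mul ((1:ℝ)/2 - u)).const_add (Real.pi * u / 2)

lemma hasDerivAt_BB (hm : HasDerivAt mf (mf1 t) t) (hd : HasDerivAt df (df1 t) t) :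
    HasDerivAt (fun t => BB mf df t u) (-(QQ mf mf1 df df1 t u)) t := by
  have hp := hasDerivAt_pp (u := u) hd
  have hS := hp.sin
  have := (hm.mul (hS.pow 2)).const_sub 1
  refine this.congr_deriv ?_
  simp only [QQ, Pi.pow_apply]
  ring

lemma hasDerivAt_QQ (hm : HasDerivAt mf (mf1 t) t) (hm1 : HasDerivAt mf1 (mf2 t) t)
    (hd : HasDerivAt df (df1 t) t) (hd1 : HasDerivAt df1 (df2 t) t) :
    HasDerivAt (fun t => QQ mf mf1 df df1 t u) (QQ2 mf mf1 mf2 df df1 df2 t u) t := by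
  have hp := hasDerivAt_pp (u := u) hd
  have hS := hp.sin
  have hC := hp.cos
  have hv : HasDerivAt (fun t => (1 / 2 - u) * df1 t) ((1 / 2 - u) * df2 t) t :=
    hd1.const_mul _
  have h1 := hm1.mul (hS.pow 2)
  have h2 := (((hm.const_mul 2).mul hS).mul hC).mul hv
  refine (h1.add h2).congr_deriv ?_
  simp only [QQ2, Pi.pow_apply, Pi.mul_apply]
  ring

lemma hasDerivAt_gg (hm : HasDerivAt mf (mf1 t) t) (hd : HasDerivAt df (df1 t) t)
    (hB : 0 < BB mf df t u) :
    HasDerivAt (fun t => gg mf df t u) (gg1 mf mf1 df df1 t u) t := by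
  have hBB := hasDerivAt_BB (u := u) hm hd
  have hsq := hBB.sqrt (ne_of_gt hB)
  have hs0 : Real.sqrt (BB mf df t u) ≠ 0 := by positivity
  have := hsq.inv hs0
  refine this.congr_deriv ?_
  simp only [gg1]
  set S := Real.sqrt (BB mf df t u) with hSdef
  have h2 : S ^ 2 = BB mf df t u := Real.sq_sqrt hB.le
  rw [← h2]
  field_simp
  try tauto

lemma hasDerivAt_gg1 (hm : HasDerivAt mf (mf1 t) t) (hm1 : HasDerivAt mf1 (mf2 t) t)
    (hd : HasDerivAt df (df1 t) t) (hd1 : HasDerivAt df1 (df2 t) t)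
    (hB : 0 < BB mf df t u) :
    HasDerivAt (fun t => gg1 mf mf1 df df1 t u) (gg2 mf mf1 mf2 df df1 df2 t u) t := by
  have hBB := hasDerivAt_BB (u := u) hm hd
  have hQ := hasDerivAt_QQ (u := u) hm hm1 hd hd1
  have hsq := hBB.sqrt (ne_of_gt hB)
  have hs0 : Real.sqrt (BB mf df t u) ≠ 0 := by positivity
  have hden : HasDerivAt (fun t => 2 * BB mf df t u * Real.sqrt (BB mf df t u))
      ((2 * -(QQ mf mf1 df df1 t u)) * Real.sqrt (BB mf df t u) +
        (2 * BB mf df t u) * (-(QQ mf mf1 df df1 t u) / (2 * Real.sqrt (BB mf df t u)))) t :=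
    (hBB.const_mul 2).mul hsq
  have hdne : 2 * BB mf df t u * Real.sqrt (BB mf df t u) ≠ 0 := by positivity
  have := hQ.div hden hdne
  refine this.congr_deriv ?_
  simp only [gg2]
  set S := Real.sqrt (BB mf df t u) with hSdef
  have h2 : S ^ 2 = BB mf df t u := Real.sq_sqrt hB.le
  rw [← h2]
  field_simp
  ring_nf
  try tauto

end KolAux
-- Layer 2: parametric differentiation helper, bounds, continuity
namespace KolAux

open Metric in
/-- differentiation under the integral sign over `[0,1]`, with continuous data. -/
lemma hasDerivAt_param {G G' : ℝ → ℝ → ℝ} {t₀ ε C : ℝ} (hε : 0 < ε)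
    (hmeas : ∀ t ∈ ball t₀ ε, Continuous fun u => G t u)
    (hmeas' : Continuous fun u => G' t₀ u)
    (hbound : ∀ u ∈ Icc (0:ℝ) 1, ∀ t ∈ ball t₀ ε, |G' t u| ≤ C)
    (hdiff : ∀ u ∈ Icc (0:ℝ) 1, ∀ t ∈ ball t₀ ε, HasDerivAt (fun t => G t u) (G' t u) t) :
    HasDerivAt (fun t => ∫ u in (0:ℝ)..1, G t u) (∫ u in (0:ℝ)..1, G' t₀ u) t₀ := by
  have hsub : Set.uIoc (0:ℝ) 1 ⊆ Icc (0:ℝ) 1 := by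
    rw [Set.uIoc_of_le (by norm_num : (0:ℝ) ≤ 1)]
    exact Set.Ioc_subset_Icc_self
  have h := intervalIntegral.hasDerivAt_integral_of_dominated_loc_of_deriv_le
    (F := G) (F' := G') (x₀ := t₀) (bound := fun _ => C) (a := 0) (b := 1)
    (μ := MeasureTheory.volume) (ball_mem_nhds t₀ hε)
    (Filter.eventually_of_mem (ball_mem_nhds t₀ hε) fun t ht =>
      ((hmeas t ht).aestronglyMeasurable).restrict)
    (((hmeas t₀ (mem_ball_self hε)).intervalIntegrable 0 1))
    (hmeas'.aestronglyMeasurable.restrict)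
    (MeasureTheory.ae_of_all _ fun u hu t ht => by
      simpa [Real.norm_eq_abs] using hbound u (hsub hu) t ht)
    intervalIntegrable_const
    (MeasureTheory.ae_of_all _ fun u hu t ht => hdiff u (hsub hu) t ht)
  exact h.2

lemma mul_abs_le {x y a c : ℝ} (hx : |x| ≤ a) (hy : |y| ≤ c) : |x * y| ≤ a * c := by
  rw [abs_mul]
  exact mul_le_mul hx hy (abs_nonneg _) (le_trans (abs_nonneg _) hx)

variable {mf mf1 mf2 df df1 df2 : ℝ → ℝ} {t u : ℝ}

lemma BB_bounds (hm : |mf t| ≤ 1/2) : 1/2 ≤ BB mf df t u ∧ BB mf df t u ≤ 3/2 := by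
  have h1 : Real.sin (pp (df t) u) ^ 2 ≤ 1 := Real.sin_sq_le_one _
  have h2 : 0 ≤ Real.sin (pp (df t) u) ^ 2 := sq_nonneg _
  have := abs_le.1 hm
  constructor <;> simp only [BB] <;> nlinarith [this.1, this.2]

lemma sqrtBB_ge (hm : |mf t| ≤ 1/2) : 1/2 ≤ Real.sqrt (BB mf df t u) := by
  have h := (BB_bounds (df := df) (u := u) hm).1
  rw [Real.le_sqrt (by norm_num) (by linarith)]
  linarith

lemma abs_vv_le {E1 : ℝ} (hu : u ∈ Icc (0:ℝ) 1) (hd1 : |df1 t| ≤ E1) :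
    |(1 / 2 - u) * df1 t| ≤ E1 := by
  obtain ⟨hu0, hu1⟩ := hu
  have h : |(1:ℝ) / 2 - u| ≤ 1 := by rw [abs_le]; constructor <;> linarith
  calc |(1 / 2 - u) * df1 t| ≤ 1 * E1 := mul_abs_le h hd1
    _ = E1 := one_mul _

lemma abs_QQ_le {K1 E1 : ℝ} (hu : u ∈ Icc (0:ℝ) 1)
    (hm : |mf t| ≤ 1/2) (hm1 : |mf1 t| ≤ K1) (hd1 : |df1 t| ≤ E1) :
    |QQ mf mf1 df df1 t u| ≤ K1 + E1 := by
  have hS := Real.abs_sin_le_one (pp (df t) u)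
  have hC := Real.abs_cos_le_one (pp (df t) u)
  have hS2 : |Real.sin (pp (df t) u) ^ 2| ≤ 1 := by
    rw [abs_pow]; exact pow_le_one₀ (abs_nonneg _) hS
  have h2m : |2 * mf t| ≤ 1 := by
    rw [abs_mul, abs_two]; linarith [abs_le.1 hm]
  have hv := abs_vv_le (df1 := df1) hu hd1
  have hT1 : |mf1 t * Real.sin (pp (df t) u) ^ 2| ≤ K1 * 1 := mul_abs_le hm1 hS2
  have hT2 : |2 * mf t * Real.sin (pp (df t) u) * Real.cos (pp (df t) u) *
      ((1 / 2 - u) * df1 t)| ≤ 1 * 1 * 1 * E1 :=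
    mul_abs_le (mul_abs_le (mul_abs_le h2m hS) hC) hv
  calc |QQ mf mf1 df df1 t u| ≤ _ + _ := abs_add_le _ _
    _ ≤ K1 * 1 + 1 * 1 * 1 * E1 := add_le_add hT1 hT2
    _ = K1 + E1 := by ring

lemma abs_gg1_le {K1 E1 : ℝ} (hu : u ∈ Icc (0:ℝ) 1)
    (hm : |mf t| ≤ 1/2) (hm1 : |mf1 t| ≤ K1) (hd1 : |df1 t| ≤ E1) :
    |gg1 mf mf1 df df1 t u| ≤ 2 * (K1 + E1) := by
  have hQ := abs_QQ_le (mf := mf) (df := df) hu hm hm1 hd1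
  have hB := (BB_bounds (df := df) (u := u) hm).1
  have hs := sqrtBB_ge (df := df) (u := u) hm
  have hden : 1/2 ≤ 2 * BB mf df t u * Real.sqrt (BB mf df t u) := by nlinarith
  have hK : 0 ≤ K1 + E1 := le_trans (abs_nonneg _) hQ
  rw [gg1, abs_div, abs_of_pos (by linarith : (0:ℝ) < 2 * BB mf df t u *
    Real.sqrt (BB mf df t u))]
  calc |QQ mf mf1 df df1 t u| / (2 * BB mf df t u * Real.sqrt (BB mf df t u))
      ≤ (K1 + E1) / (1/2) := div_le_div₀ hK hQ (by norm_num) hden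
    _ = 2 * (K1 + E1) := by ring

lemma abs_QQ2_le {K1 K2 E1 E2 : ℝ} (hu : u ∈ Icc (0:ℝ) 1)
    (hm : |mf t| ≤ 1/2) (hm1 : |mf1 t| ≤ K1) (hm2 : |mf2 t| ≤ K2)
    (hd1 : |df1 t| ≤ E1) (hd2 : |df2 t| ≤ E2) :
    |QQ2 mf mf1 mf2 df df1 df2 t u| ≤ K2 + 4 * K1 * E1 + E1 ^ 2 + E2 := by
  have hS := Real.abs_sin_le_one (pp (df t) u)
  have hC := Real.abs_cos_le_one (pp (df t) u)
  have hS2 : |Real.sin (pp (df t) u) ^ 2| ≤ 1 := by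
    rw [abs_pow]; exact pow_le_one₀ (abs_nonneg _) hS
  have h2m : |2 * mf t| ≤ 1 := by
    rw [abs_mul, abs_two]; linarith [abs_le.1 hm]
  have h4m1 : |4 * mf1 t| ≤ 4 * K1 := by
    rw [abs_mul, (by norm_num : |(4:ℝ)| = 4)]; linarith [abs_le.1 hm1, abs_nonneg (mf1 t)]
  have hv := abs_vv_le (df1 := df1) hu hd1
  have hv' := abs_vv_le (df1 := df2) hu hd2
  have hCS : |Real.cos (pp (df t) u) ^ 2 - Real.sin (pp (df t) u) ^ 2| ≤ 1 := by
    have := Real.sin_sq_add_cos_sq (pp (df t) u)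
    rw [abs_le]
    constructor <;> nlinarith [sq_nonneg (Real.sin (pp (df t) u)),
      sq_nonneg (Real.cos (pp (df t) u))]
  have hv2 : |((1 / 2 - u) * df1 t) ^ 2| ≤ E1 ^ 2 := by
    rw [abs_pow]
    exact pow_le_pow_left₀ (abs_nonneg _) hv 2
  have hT1 : |mf2 t * Real.sin (pp (df t) u) ^ 2| ≤ K2 * 1 := mul_abs_le hm2 hS2
  have hT2 : |4 * mf1 t * Real.sin (pp (df t) u) * Real.cos (pp (df t) u) *
      ((1 / 2 - u) * df1 t)| ≤ 4 * K1 * 1 * 1 * E1 :=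
    mul_abs_le (mul_abs_le (mul_abs_le h4m1 hS) hC) hv
  have hT3 : |2 * mf t * (Real.cos (pp (df t) u) ^ 2 - Real.sin (pp (df t) u) ^ 2) *
      ((1 / 2 - u) * df1 t) ^ 2| ≤ 1 * 1 * E1 ^ 2 :=
    mul_abs_le (mul_abs_le h2m hCS) hv2
  have hT4 : |2 * mf t * Real.sin (pp (df t) u) * Real.cos (pp (df t) u) *
      ((1 / 2 - u) * df2 t)| ≤ 1 * 1 * 1 * E2 :=
    mul_abs_le (mul_abs_le (mul_abs_le h2m hS) hC) hv'
  calc |QQ2 mf mf1 mf2 df df1 df2 t u| ≤ _ + _ := abs_add_le _ _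
    _ ≤ (|_ + _ + _|) + (1 * 1 * 1 * E2) := add_le_add le_rfl hT4
    _ ≤ (|_ + _| + |_|) + (1 * 1 * 1 * E2) := add_le_add (abs_add_le _ _) le_rfl
    _ ≤ ((|_| + |_|) + |_|) + (1 * 1 * 1 * E2) :=
        add_le_add (add_le_add (abs_add_le _ _) le_rfl) le_rfl
    _ ≤ ((K2 * 1 + 4 * K1 * 1 * 1 * E1) + 1 * 1 * E1 ^ 2) + 1 * 1 * 1 * E2 :=
        add_le_add (add_le_add (add_le_add hT1 hT2) hT3) le_rfl
    _ = K2 + 4 * K1 * E1 + E1 ^ 2 + E2 := by ring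

lemma abs_gg2_le {K1 K2 E1 E2 : ℝ} (hu : u ∈ Icc (0:ℝ) 1)
    (hm : |mf t| ≤ 1/2) (hm1 : |mf1 t| ≤ K1) (hm2 : |mf2 t| ≤ K2)
    (hd1 : |df1 t| ≤ E1) (hd2 : |df2 t| ≤ E2) :
    |gg2 mf mf1 mf2 df df1 df2 t u| ≤
      2 * (K2 + 4 * K1 * E1 + E1 ^ 2 + E2) + 6 * (K1 + E1) ^ 2 := by
  have hQ := abs_QQ_le (mf := mf) (df := df) hu hm hm1 hd1
  have hQ2 := abs_QQ2_le (mf := mf) (df := df) hu hm hm1 hm2 hd1 hd2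
  have hB := (BB_bounds (df := df) (u := u) hm).1
  have hs := sqrtBB_ge (df := df) (u := u) hm
  have hden1 : 1/2 ≤ 2 * BB mf df t u * Real.sqrt (BB mf df t u) := by nlinarith
  have hden2 : 1/2 ≤ 4 * BB mf df t u ^ 2 * Real.sqrt (BB mf df t u) := by nlinarith
  have hKQ2 : 0 ≤ K2 + 4 * K1 * E1 + E1 ^ 2 + E2 := le_trans (abs_nonneg _) hQ2
  have h1 : |QQ2 mf mf1 mf2 df df1 df2 t u / (2 * BB mf df t u * Real.sqrt (BB mf df t u))|
      ≤ 2 * (K2 + 4 * K1 * E1 + E1 ^ 2 + E2) := by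
    rw [abs_div, abs_of_pos (by linarith : (0:ℝ) < 2 * BB mf df t u *
      Real.sqrt (BB mf df t u))]
    calc _ ≤ (K2 + 4 * K1 * E1 + E1 ^ 2 + E2) / (1/2) := div_le_div₀ hKQ2 hQ2 (by norm_num) hden1
      _ = _ := by ring
  have h2 : |3 * QQ mf mf1 df df1 t u ^ 2 / (4 * BB mf df t u ^ 2 *
      Real.sqrt (BB mf df t u))| ≤ 6 * (K1 + E1) ^ 2 := by
    have hq2 : |3 * QQ mf mf1 df df1 t u ^ 2| ≤ 3 * (K1 + E1) ^ 2 := by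
      rw [abs_mul, (by norm_num : |(3:ℝ)| = 3), abs_pow]
      have := pow_le_pow_left₀ (abs_nonneg _) hQ 2
      linarith
    rw [abs_div, abs_of_pos (by linarith : (0:ℝ) < 4 * BB mf df t u ^ 2 *
      Real.sqrt (BB mf df t u))]
    calc _ ≤ (3 * (K1 + E1) ^ 2) / (1/2) :=
          div_le_div₀ (by positivity) hq2 (by norm_num) hden2
      _ = 6 * (K1 + E1) ^ 2 := by ring
  calc |gg2 mf mf1 mf2 df df1 df2 t u| ≤ _ + _ := abs_add_le _ _
    _ ≤ _ := add_le_add h1 h2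

end KolAux
-- Layer 3: concrete functions and their derivatives
namespace KolAux

def KK (b : ℝ) : ℝ := Real.sqrt (1 - b ^ 2)
def mmf (t : ℝ) : ℝ := 4 * Real.sin t / (1 + Real.sin t) ^ 2
def mmf1 (t : ℝ) : ℝ := 4 * Real.cos t * (1 - Real.sin t) / (1 + Real.sin t) ^ 3
def mmf2 (t : ℝ) : ℝ :=
  4 * (-(Real.sin t) * (1 - Real.sin t) * (1 + Real.sin t) - Real.cos t ^ 2 * (1 + Real.sin t)
    - 3 * Real.cos t ^ 2 * (1 - Real.sin t)) / (1 + Real.sin t) ^ 4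
def Dw (b t : ℝ) : ℝ := 1 - (1 - b ^ 2) * Real.sin t ^ 2
def wwf (b t : ℝ) : ℝ := Real.sqrt (1 - b ^ 2) * (1 - Real.sin t ^ 2) / Dw b t
def wwf1 (b t : ℝ) : ℝ := -(2 * KK b * b ^ 2 * Real.sin t * Real.cos t) / Dw b t ^ 2
def wwf2 (b t : ℝ) : ℝ :=
  -(2 * KK b * b ^ 2 * ((Real.cos t ^ 2 - Real.sin t ^ 2) * Dw b t
    + 4 * (1 - b ^ 2) * Real.sin t ^ 2 * Real.cos t ^ 2)) / Dw b t ^ 3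
def ddf (b t : ℝ) : ℝ := Real.arcsin (wwf b t)
def ddf1 (b t : ℝ) : ℝ := wwf1 b t / Real.sqrt (1 - wwf b t ^ 2)
def ddf2 (b t : ℝ) : ℝ := wwf2 b t / Real.sqrt (1 - wwf b t ^ 2)
  + wwf b t * wwf1 b t ^ 2 / Real.sqrt (1 - wwf b t ^ 2) ^ 3

variable {b t : ℝ}

lemma KK_nonneg : 0 ≤ KK b := Real.sqrt_nonneg _
lemma KK_sq (hb1 : b ≤ 1) (hb0 : 0 < b) : KK b ^ 2 = 1 - b ^ 2 := by
  rw [KK]; exact Real.sq_sqrt (by nlinarith)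
lemma KK_lt_one (hb0 : 0 < b) (hb1 : b ≤ 1) : KK b < 1 := by
  nlinarith [KK_nonneg (b := b), KK_sq hb1 hb0, sq_nonneg (KK b - 1)]
lemma KK_le_one (hb0 : 0 < b) (hb1 : b ≤ 1) : KK b ≤ 1 := (KK_lt_one hb0 hb1).le

lemma Dw_pos (hb0 : 0 < b) (hb1 : b ≤ 1) : 0 < Dw b t := by
  have h := Real.sin_sq_le_one t
  have h2 := sq_nonneg (Real.sin t)
  have h3 : (1 - b ^ 2) * Real.sin t ^ 2 ≤ (1 - b ^ 2) * 1 :=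
    mul_le_mul_of_nonneg_left h (by nlinarith)
  simp only [Dw]; nlinarith

lemma Dw_ne (hb0 : 0 < b) (hb1 : b ≤ 1) : Dw b t ≠ 0 := ne_of_gt (Dw_pos hb0 hb1)

lemma wwf_nonneg (hb0 : 0 < b) (hb1 : b ≤ 1) : 0 ≤ wwf b t := by
  apply div_nonneg _ (Dw_pos hb0 hb1).le
  have := Real.sin_sq_le_one t
  exact mul_nonneg (Real.sqrt_nonneg _) (by nlinarith)

lemma wwf_le_KK (hb0 : 0 < b) (hb1 : b ≤ 1) : wwf b t ≤ KK b := by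
  rw [wwf, div_le_iff₀ (Dw_pos hb0 hb1)]
  simp only [KK, Dw]
  have h1 : (1 : ℝ) - Real.sin t ^ 2 ≤ 1 - (1 - b ^ 2) * Real.sin t ^ 2 := by
    nlinarith [mul_le_mul_of_nonneg_right (show 1 - b ^ 2 ≤ 1 by nlinarith)
      (sq_nonneg (Real.sin t))]
  exact mul_le_mul_of_nonneg_left h1 (Real.sqrt_nonneg _)

lemma one_sub_wwf_sq (hb0 : 0 < b) (hb1 : b ≤ 1) : b ^ 2 ≤ 1 - wwf b t ^ 2 := by
  have h1 := wwf_nonneg (t := t) hb0 hb1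
  have h2 := wwf_le_KK (t := t) hb0 hb1
  have h3 := KK_sq (b := b) hb1 hb0
  nlinarith

lemma sqrt_one_sub_wwf_sq_ge (hb0 : 0 < b) (hb1 : b ≤ 1) :
    b ≤ Real.sqrt (1 - wwf b t ^ 2) := by
  rw [Real.le_sqrt hb0.le (by nlinarith [one_sub_wwf_sq (t := t) hb0 hb1])]
  exact one_sub_wwf_sq hb0 hb1

lemma hasDerivAt_mmf (hs : 0 < 1 + Real.sin t) : HasDerivAt mmf (mmf1 t) t := by
  have hne : (1 + Real.sin t) ≠ 0 := ne_of_gt hs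
  have hnum : HasDerivAt (fun t => 4 * Real.sin t) (4 * Real.cos t) t :=
    (Real.hasDerivAt_sin t).const_mul 4
  have hden : HasDerivAt (fun t => (1 + Real.sin t) ^ 2)
      ((2 : ℕ) * (1 + Real.sin t) ^ 1 * Real.cos t) t :=
    ((Real.hasDerivAt_sin t).const_add 1).pow 2
  have := hnum.div hden (pow_ne_zero 2 hne)
  refine this.congr_deriv ?_
  simp only [mmf1]
  field_simp
  ring

lemma hasDerivAt_mmf1 (hs : 0 < 1 + Real.sin t) : HasDerivAt mmf1 (mmf2 t) t := by
  have hne : (1 + Real.sin t) ≠ 0 := ne_of_gt hs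
  have hnum : HasDerivAt (fun t => 4 * Real.cos t * (1 - Real.sin t))
      ((4 * -Real.sin t) * (1 - Real.sin t) + (4 * Real.cos t) * (-Real.cos t)) t := by
    exact ((Real.hasDerivAt_cos t).const_mul 4).mul ((Real.hasDerivAt_sin t).const_sub 1)
  have hden : HasDerivAt (fun t => (1 + Real.sin t) ^ 3)
      ((3 : ℕ) * (1 + Real.sin t) ^ 2 * Real.cos t) t :=
    ((Real.hasDerivAt_sin t).const_add 1).pow 3
  have := hnum.div hden (pow_ne_zero 3 hne)
  refine this.congr_deriv ?_
  simp only [mmf2]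
  field_simp
  try ring

lemma hasDerivAt_Dw : HasDerivAt (fun t => Dw b t)
    (-((1 - b ^ 2) * (2 * Real.sin t * Real.cos t))) t := by
  have h : HasDerivAt (fun t => Real.sin t ^ 2)
      ((2 : ℕ) * Real.sin t ^ 1 * Real.cos t) t := (Real.hasDerivAt_sin t).pow 2
  have := (h.const_mul (1 - b ^ 2)).const_sub 1
  refine this.congr_deriv ?_
  push_cast
  ring

lemma hasDerivAt_wwf (hb0 : 0 < b) (hb1 : b ≤ 1) :
    HasDerivAt (fun t => wwf b t) (wwf1 b t) t := by
  have hnum : HasDerivAt (fun t => Real.sqrt (1 - b ^ 2) * (1 - Real.sin t ^ 2))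
      (Real.sqrt (1 - b ^ 2) * -((2 : ℕ) * Real.sin t ^ 1 * Real.cos t)) t :=
    (((Real.hasDerivAt_sin t).pow 2).const_sub 1).const_mul _
  have := hnum.div (hasDerivAt_Dw (b := b)) (Dw_ne hb0 hb1)
  refine this.congr_deriv ?_
  simp only [wwf1, KK, Dw]
  have hD := Dw_ne (b := b) (t := t) hb0 hb1
  rw [Dw] at hD
  field_simp
  try ring

lemma hasDerivAt_wwf1 (hb0 : 0 < b) (hb1 : b ≤ 1) :
    HasDerivAt (fun t => wwf1 b t) (wwf2 b t) t := by
  have hnum : HasDerivAt (fun t => -(2 * KK b * b ^ 2 * Real.sin t * Real.cos t))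
      (-((2 * KK b * b ^ 2 * Real.cos t) * Real.cos t
        + (2 * KK b * b ^ 2 * Real.sin t) * -Real.sin t)) t := by
    have := (((Real.hasDerivAt_sin t).const_mul (2 * KK b * b ^ 2)).mul
      (Real.hasDerivAt_cos t)).neg
    refine this.congr_deriv ?_
    try ring
  have hden : HasDerivAt (fun t => Dw b t ^ 2)
      ((2 : ℕ) * Dw b t ^ 1 * -((1 - b ^ 2) * (2 * Real.sin t * Real.cos t))) t :=
    (hasDerivAt_Dw (b := b)).pow 2
  have := hnum.div hden (pow_ne_zero 2 (Dw_ne hb0 hb1))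
  refine this.congr_deriv ?_
  simp only [wwf2]
  have hD := Dw_ne (b := b) (t := t) hb0 hb1
  field_simp
  try ring

lemma hasDerivAt_ddf (hb0 : 0 < b) (hb1 : b ≤ 1) :
    HasDerivAt (fun t => ddf b t) (ddf1 b t) t := by
  have hw := hasDerivAt_wwf (t := t) hb0 hb1
  have h0 := wwf_nonneg (t := t) hb0 hb1
  have hK := wwf_le_KK (t := t) hb0 hb1
  have hK1 := KK_lt_one hb0 hb1
  have h1 : wwf b t ≠ -1 := by linarith
  have h2 : wwf b t ≠ 1 := by linarith
  have := (Real.hasDerivAt_arcsin h1 h2).comp t hw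
  refine this.congr_deriv ?_
  simp only [ddf1]
  ring

lemma hasDerivAt_ddf1 (hb0 : 0 < b) (hb1 : b ≤ 1) :
    HasDerivAt (fun t => ddf1 b t) (ddf2 b t) t := by
  have hw := hasDerivAt_wwf (t := t) hb0 hb1
  have hw1 := hasDerivAt_wwf1 (t := t) hb0 hb1
  have hpos : 0 < 1 - wwf b t ^ 2 := by nlinarith [one_sub_wwf_sq (t := t) hb0 hb1]
  have hinner : HasDerivAt (fun t => 1 - wwf b t ^ 2)
      (-((2 : ℕ) * wwf b t ^ 1 * wwf1 b t)) t := ((hw.pow 2).const_sub 1)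
  have hg := hinner.sqrt (ne_of_gt hpos)
  have hsne : Real.sqrt (1 - wwf b t ^ 2) ≠ 0 := by positivity
  have := hw1.div hg hsne
  refine this.congr_deriv ?_
  simp only [ddf2]
  set S := Real.sqrt (1 - wwf b t ^ 2) with hSdef
  have h2 : S ^ 2 = 1 - wwf b t ^ 2 := Real.sq_sqrt hpos.le
  field_simp
  ring_nf
  try rw [show S ^ 4 = (S ^ 2) ^ 2 by ring, h2]
  try ring

end KolAux
-- Layer 4: values at 0, bounds on |sin t| ≤ 1/16
namespace KolAux

variable {b t : ℝ}

lemma mmf_zero : mmf 0 = 0 := by simp [mmf]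
lemma mmf1_zero : mmf1 0 = 4 := by norm_num [mmf1]
lemma mmf2_zero : mmf2 0 = -16 := by norm_num [mmf2]
lemma wwf_zero : wwf b 0 = KK b := by simp [wwf, Dw, KK]
lemma wwf1_zero : wwf1 b 0 = 0 := by simp [wwf1]
lemma wwf2_zero : wwf2 b 0 = -(2 * KK b * b ^ 2) := by norm_num [wwf2, Dw]
lemma ddf_zero : ddf b 0 = Real.arcsin (KK b) := by rw [ddf, wwf_zero]
lemma ddf1_zero : ddf1 b 0 = 0 := by simp [ddf1, wwf1_zero]

lemma sqrt_one_sub_KK_sq (hb0 : 0 < b) (hb1 : b ≤ 1) :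
    Real.sqrt (1 - KK b ^ 2) = b := by
  rw [KK_sq hb1 hb0, show 1 - (1 - b ^ 2) = b ^ 2 by ring, Real.sqrt_sq hb0.le]

lemma ddf2_zero (hb0 : 0 < b) (hb1 : b ≤ 1) : ddf2 b 0 = -(2 * KK b * b) := by
  rw [ddf2, wwf2_zero, wwf_zero, wwf1_zero, sqrt_one_sub_KK_sq hb0 hb1]
  field_simp
  ring

-- sin/cos of arcsin (KK b)
lemma sin_ddf_zero (hb0 : 0 < b) (hb1 : b ≤ 1) : Real.sin (Real.arcsin (KK b)) = KK b :=
  Real.sin_arcsin (by linarith [KK_nonneg (b := b)]) (KK_le_one hb0 hb1)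

lemma cos_ddf_zero (hb0 : 0 < b) (hb1 : b ≤ 1) : Real.cos (Real.arcsin (KK b)) = b := by
  rw [Real.cos_arcsin, sqrt_one_sub_KK_sq hb0 hb1]

lemma ddf_zero_mem (hb0 : 0 < b) (hb1 : b < 1) :
    0 < Real.arcsin (KK b) ∧ Real.arcsin (KK b) < Real.pi / 2 := by
  constructor
  · apply Real.arcsin_pos.2
    have h := KK_sq (b := b) hb1.le hb0
    have := KK_nonneg (b := b)
    rcases eq_or_lt_of_le this with h0 | h0
    · exfalso; nlinarith
    · exact h0
  · exact Real.arcsin_lt_pi_div_two.2 (KK_lt_one hb0 hb1.le)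

-- bounds
section bounds
variable (hs : |Real.sin t| ≤ 1 / 16)
include hs

lemma one_add_sin_bounds : 15/16 ≤ 1 + Real.sin t ∧ 1 + Real.sin t ≤ 17/16 := by
  have h := abs_le.1 hs
  constructor <;> linarith [h.1, h.2]

lemma abs_mmf_le : |mmf t| ≤ 1/2 := by
  obtain ⟨h1, h2⟩ := one_add_sin_bounds hs
  have hpos : (0:ℝ) < (1 + Real.sin t) ^ 2 := by positivity
  rw [mmf, abs_div, abs_of_pos hpos, div_le_iff₀ hpos]
  have h4 : |4 * Real.sin t| ≤ 1/4 := by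
    rw [abs_mul, (by norm_num : |(4:ℝ)| = 4)]; linarith
  nlinarith

lemma abs_mmf1_le : |mmf1 t| ≤ 8 := by
  obtain ⟨h1, h2⟩ := one_add_sin_bounds hs
  have hpos : (0:ℝ) < (1 + Real.sin t) ^ 3 := by positivity
  rw [mmf1, abs_div, abs_of_pos hpos, div_le_iff₀ hpos]
  have hn : |4 * Real.cos t * (1 - Real.sin t)| ≤ 4 * (17/16) := by
    have : |(1:ℝ) - Real.sin t| ≤ 17/16 := by
      rw [abs_le]; constructor <;> linarith [(abs_le.1 hs).1, (abs_le.1 hs).2]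
    have h4c : |4 * Real.cos t| ≤ 4 := by
      rw [abs_mul, (by norm_num : |(4:ℝ)| = 4)]
      linarith [Real.abs_cos_le_one t]
    simpa using mul_abs_le h4c this
  have hd : ((15:ℝ)/16) ^ 3 ≤ (1 + Real.sin t) ^ 3 :=
    pow_le_pow_left₀ (by norm_num) h1 3
  nlinarith

lemma abs_mmf2_le : |mmf2 t| ≤ 32 := by
  obtain ⟨h1, h2⟩ := one_add_sin_bounds hs
  have hpos : (0:ℝ) < (1 + Real.sin t) ^ 4 := by positivity
  rw [mmf2, abs_div, abs_of_pos hpos, div_le_iff₀ hpos]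
  have hb1 : |(1:ℝ) - Real.sin t| ≤ 17/16 := by
    rw [abs_le]; constructor <;> linarith [(abs_le.1 hs).1, (abs_le.1 hs).2]
  have hb2 : |(1:ℝ) + Real.sin t| ≤ 17/16 := by
    rw [abs_le]; constructor <;> linarith [(abs_le.1 hs).1, (abs_le.1 hs).2]
  have hc2 : |Real.cos t ^ 2| ≤ 1 := by
    rw [abs_pow]; exact pow_le_one₀ (abs_nonneg _) (Real.abs_cos_le_one t)
  have hT1 : |-Real.sin t * (1 - Real.sin t) * (1 + Real.sin t)| ≤ 1/16 * (17/16) * (17/16) :=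
    mul_abs_le (mul_abs_le (by rwa [abs_neg]) hb1) hb2
  have hT2 : |Real.cos t ^ 2 * (1 + Real.sin t)| ≤ 1 * (17/16) := mul_abs_le hc2 hb2
  have hT3 : |3 * Real.cos t ^ 2 * (1 - Real.sin t)| ≤ 3 * 1 * (17/16) := by
    refine mul_abs_le (mul_abs_le ?_ hc2) hb1
    norm_num
  have hsum : |-Real.sin t * (1 - Real.sin t) * (1 + Real.sin t)
      - Real.cos t ^ 2 * (1 + Real.sin t) - 3 * Real.cos t ^ 2 * (1 - Real.sin t)| ≤ 5 := by
    calc _ ≤ |-Real.sin t * (1 - Real.sin t) * (1 + Real.sin t)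
        - Real.cos t ^ 2 * (1 + Real.sin t)| + |3 * Real.cos t ^ 2 * (1 - Real.sin t)| :=
          abs_sub _ _
      _ ≤ (|-Real.sin t * (1 - Real.sin t) * (1 + Real.sin t)|
          + |Real.cos t ^ 2 * (1 + Real.sin t)|) + |3 * Real.cos t ^ 2 * (1 - Real.sin t)| :=
          add_le_add (abs_sub _ _) le_rfl
      _ ≤ (1/16 * (17/16) * (17/16) + 1 * (17/16)) + 3 * 1 * (17/16) :=
          add_le_add (add_le_add hT1 hT2) hT3
      _ ≤ 5 := by norm_num
  have h4 : |4 * (-Real.sin t * (1 - Real.sin t) * (1 + Real.sin t)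
      - Real.cos t ^ 2 * (1 + Real.sin t) - 3 * Real.cos t ^ 2 * (1 - Real.sin t))| ≤ 4 * 5 := by
    rw [abs_mul, (by norm_num : |(4:ℝ)| = 4)]
    linarith
  have hd : ((15:ℝ)/16) ^ 4 ≤ (1 + Real.sin t) ^ 4 := pow_le_pow_left₀ (by norm_num) h1 4
  nlinarith

lemma Dw_ge (hb0 : 0 < b) (hb1 : b ≤ 1) : 255/256 ≤ Dw b t := by
  have h := abs_le.1 hs
  have hsq : Real.sin t ^ 2 ≤ 1/256 := by nlinarith [h.1, h.2]
  have : (1 - b ^ 2) * Real.sin t ^ 2 ≤ 1/256 := by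
    nlinarith [sq_nonneg (Real.sin t), sq_nonneg b]
  simp only [Dw]; linarith

lemma abs_wwf1_le (hb0 : 0 < b) (hb1 : b ≤ 1) : |wwf1 b t| ≤ 1/4 := by
  have hD := Dw_ge (t := t) hs hb0 hb1
  have hpos : (0:ℝ) < Dw b t ^ 2 := by positivity
  rw [wwf1, abs_div, abs_of_pos hpos, div_le_iff₀ hpos]
  have hK2 : |2 * KK b * b ^ 2| ≤ 2 := by
    have : |2 * KK b| ≤ 2 := by
      rw [abs_mul, abs_two, abs_of_nonneg KK_nonneg]
      linarith [KK_le_one hb0 hb1]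
    have hb2 : |b ^ 2| ≤ 1 := by rw [abs_pow]; nlinarith [abs_of_pos hb0]
    simpa using mul_abs_le this hb2
  have hn : |2 * KK b * b ^ 2 * Real.sin t * Real.cos t| ≤ 2 * (1/16) * 1 :=
    mul_abs_le (mul_abs_le hK2 hs) (Real.abs_cos_le_one t)
  rw [abs_neg]
  nlinarith [pow_le_pow_left₀ (by norm_num : (0:ℝ) ≤ 255/256) hD 2]

lemma abs_wwf2_le (hb0 : 0 < b) (hb1 : b ≤ 1) : |wwf2 b t| ≤ 5 := by
  have hD := Dw_ge (t := t) hs hb0 hb1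
  have hD1 : Dw b t ≤ 1 := by
    simp only [Dw]
    nlinarith [mul_nonneg (show (0:ℝ) ≤ 1 - b ^ 2 by nlinarith) (sq_nonneg (Real.sin t))]
  have hpos : (0:ℝ) < Dw b t ^ 3 := by positivity
  rw [wwf2, abs_div, abs_of_pos hpos, div_le_iff₀ hpos]
  have hK2 : |2 * KK b * b ^ 2| ≤ 2 := by
    have : |2 * KK b| ≤ 2 := by
      rw [abs_mul, abs_two, abs_of_nonneg KK_nonneg]
      linarith [KK_le_one hb0 hb1]
    have hb2 : |b ^ 2| ≤ 1 := by rw [abs_pow]; nlinarith [abs_of_pos hb0]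
    simpa using mul_abs_le this hb2
  have hcs : |Real.cos t ^ 2 - Real.sin t ^ 2| ≤ 1 := by
    have := Real.sin_sq_add_cos_sq t
    rw [abs_le]
    constructor <;> nlinarith [sq_nonneg (Real.sin t), sq_nonneg (Real.cos t)]
  have hDw : |Dw b t| ≤ 1 := by rw [abs_le]; constructor <;> linarith
  have hT1 : |(Real.cos t ^ 2 - Real.sin t ^ 2) * Dw b t| ≤ 1 * 1 := mul_abs_le hcs hDw
  have hT2 : |4 * (1 - b ^ 2) * Real.sin t ^ 2 * Real.cos t ^ 2| ≤ 4 * (1/256) := by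
    have h4 : |4 * (1 - b ^ 2)| ≤ 4 := by
      rw [abs_mul, (by norm_num : |(4:ℝ)| = 4)]
      have : |1 - b ^ 2| ≤ 1 := by rw [abs_le]; constructor <;> nlinarith
      linarith [this]
    have hs2 : |Real.sin t ^ 2| ≤ 1/256 := by
      rw [abs_pow]; nlinarith [abs_nonneg (Real.sin t), sq_abs (Real.sin t),
        pow_le_pow_left₀ (abs_nonneg (Real.sin t)) hs 2]
    have hc2 : |Real.cos t ^ 2| ≤ 1 := by
      rw [abs_pow]; exact pow_le_one₀ (abs_nonneg _) (Real.abs_cos_le_one t)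
    calc _ ≤ 4 * (1/256) * 1 := mul_abs_le (mul_abs_le h4 hs2) hc2
      _ = 4 * (1/256) := by ring
  have hsum : |(Real.cos t ^ 2 - Real.sin t ^ 2) * Dw b t
      + 4 * (1 - b ^ 2) * Real.sin t ^ 2 * Real.cos t ^ 2| ≤ 2 := by
    calc _ ≤ _ + _ := abs_add_le _ _
      _ ≤ 1 * 1 + 4 * (1/256) := add_le_add hT1 hT2
      _ ≤ 2 := by norm_num
  have hn : |2 * KK b * b ^ 2 * ((Real.cos t ^ 2 - Real.sin t ^ 2) * Dw b t
      + 4 * (1 - b ^ 2) * Real.sin t ^ 2 * Real.cos t ^ 2)| ≤ 2 * 2 := mul_abs_le hK2 hsum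
  rw [abs_neg]
  nlinarith [pow_le_pow_left₀ (by norm_num : (0:ℝ) ≤ 255/256) hD 3]

lemma abs_ddf1_le (hb0 : 0 < b) (hb1 : b ≤ 1) : |ddf1 b t| ≤ 1/b := by
  have h1 := abs_wwf1_le (t := t) hs hb0 hb1
  have h2 := sqrt_one_sub_wwf_sq_ge (t := t) hb0 hb1
  have hpos : (0:ℝ) < Real.sqrt (1 - wwf b t ^ 2) := lt_of_lt_of_le hb0 h2
  rw [ddf1, abs_div, abs_of_pos hpos]
  calc |wwf1 b t| / Real.sqrt (1 - wwf b t ^ 2) ≤ (1/4) / b :=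
        div_le_div₀ (by norm_num) h1 hb0 h2
    _ ≤ 1/b := div_le_div₀ (by norm_num) (by norm_num) hb0 le_rfl

lemma abs_ddf2_le (hb0 : 0 < b) (hb1 : b ≤ 1) : |ddf2 b t| ≤ 6/b^3 := by
  have hw2 := abs_wwf2_le (t := t) hs hb0 hb1
  have hw1 := abs_wwf1_le (t := t) hs hb0 hb1
  have h2 := sqrt_one_sub_wwf_sq_ge (t := t) hb0 hb1
  have hpos : (0:ℝ) < Real.sqrt (1 - wwf b t ^ 2) := lt_of_lt_of_le hb0 h2
  have hb3 : (0:ℝ) < b ^ 3 := by positivity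
  have hcube : b ^ 3 ≤ Real.sqrt (1 - wwf b t ^ 2) ^ 3 :=
    pow_le_pow_left₀ hb0.le h2 3
  have hT1 : |wwf2 b t / Real.sqrt (1 - wwf b t ^ 2)| ≤ 5 / b ^ 3 := by
    rw [abs_div, abs_of_pos hpos]
    calc |wwf2 b t| / Real.sqrt (1 - wwf b t ^ 2) ≤ 5 / b := div_le_div₀ (by norm_num) hw2 hb0 h2
      _ ≤ 5 / b ^ 3 := by
          have hb2 : b ^ 2 ≤ 1 := by nlinarith
          exact div_le_div₀ (by norm_num) le_rfl hb3
            (by nlinarith [mul_le_mul_of_nonneg_left hb2 hb0.le])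
  have hT2 : |wwf b t * wwf1 b t ^ 2 / Real.sqrt (1 - wwf b t ^ 2) ^ 3| ≤ 1 / b ^ 3 := by
    rw [abs_div, abs_of_pos (pow_pos hpos 3)]
    have hnum : |wwf b t * wwf1 b t ^ 2| ≤ 1 := by
      have hw : |wwf b t| ≤ 1 := by
        rw [abs_of_nonneg (wwf_nonneg hb0 hb1)]
        linarith [wwf_le_KK (t := t) hb0 hb1, KK_le_one hb0 hb1]
      have : |wwf1 b t ^ 2| ≤ 1 := by
        rw [abs_pow]
        nlinarith [abs_nonneg (wwf1 b t)]
      simpa using mul_abs_le hw this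
    exact div_le_div₀ (by norm_num) hnum (by positivity) hcube
  calc |ddf2 b t| ≤ _ + _ := abs_add_le _ _
    _ ≤ 5 / b ^ 3 + 1 / b ^ 3 := add_le_add hT1 hT2
    _ = 6 / b ^ 3 := by ring

end bounds
end KolAux
-- Layer 5: continuity in u, psi functions, derivatives of psi
namespace KolAux

variable {mf mf1 mf2 df df1 df2 : ℝ → ℝ} {b t : ℝ}

lemma continuous_BB_u : Continuous fun u => BB mf df t u := by
  simp only [BB, pp]; fun_prop

lemma continuous_gg_u (hm : |mf t| ≤ 1/2) : Continuous fun u => gg mf df t u := by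
  apply Continuous.inv₀ (continuous_BB_u.sqrt)
  intro u
  exact ne_of_gt (Real.sqrt_pos.2 (by linarith [(BB_bounds (df := df) (u := u) hm).1]))

lemma continuous_den_u : Continuous fun u => 2 * BB mf df t u * Real.sqrt (BB mf df t u) := by
  have h := continuous_BB_u (mf := mf) (df := df) (t := t)
  fun_prop

lemma continuous_den2_u :
    Continuous fun u => 4 * BB mf df t u ^ 2 * Real.sqrt (BB mf df t u) := by
  have h := continuous_BB_u (mf := mf) (df := df) (t := t)
  fun_prop

lemma den_ne (hm : |mf t| ≤ 1/2) {u : ℝ} :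
    2 * BB mf df t u * Real.sqrt (BB mf df t u) ≠ 0 := by
  have h1 := (BB_bounds (df := df) (u := u) hm).1
  have h2 := sqrtBB_ge (df := df) (u := u) hm
  positivity

lemma den2_ne (hm : |mf t| ≤ 1/2) {u : ℝ} :
    4 * BB mf df t u ^ 2 * Real.sqrt (BB mf df t u) ≠ 0 := by
  have h1 := (BB_bounds (df := df) (u := u) hm).1
  have h2 := sqrtBB_ge (df := df) (u := u) hm
  positivity

lemma continuous_QQ_u : Continuous fun u => QQ mf mf1 df df1 t u := by
  simp only [QQ, pp]; fun_prop

lemma continuous_QQ2_u : Continuous fun u => QQ2 mf mf1 mf2 df df1 df2 t u := by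
  simp only [QQ2, pp]; fun_prop

lemma continuous_gg1_u (hm : |mf t| ≤ 1/2) :
    Continuous fun u => gg1 mf mf1 df df1 t u :=
  continuous_QQ_u.div continuous_den_u fun _ => den_ne hm

lemma continuous_gg2_u (hm : |mf t| ≤ 1/2) :
    Continuous fun u => gg2 mf mf1 mf2 df df1 df2 t u := by
  exact (continuous_QQ2_u.div continuous_den_u fun _ => den_ne hm).add
    (((continuous_const.mul (continuous_QQ_u.pow 2))).div continuous_den2_u
      fun _ => den2_ne hm)

-- psi functions
def zf : ℝ → ℝ := fun _ => 0
def psiN (b t : ℝ) : ℝ := ∫ u in (0:ℝ)..1, gg mmf (ddf b) t u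
def psiN1 (b t : ℝ) : ℝ := ∫ u in (0:ℝ)..1, gg1 mmf mmf1 (ddf b) (ddf1 b) t u
def psiN2 (b t : ℝ) : ℝ := ∫ u in (0:ℝ)..1, gg2 mmf mmf1 mmf2 (ddf b) (ddf1 b) (ddf2 b) t u
def psiD (t : ℝ) : ℝ := ∫ u in (0:ℝ)..1, gg mmf zf t u
def psiD1 (t : ℝ) : ℝ := ∫ u in (0:ℝ)..1, gg1 mmf mmf1 zf zf t u
def psiD2 (t : ℝ) : ℝ := ∫ u in (0:ℝ)..1, gg2 mmf mmf1 mmf2 zf zf zf t u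

lemma sin_small {t t₀ : ℝ} (ht : |t₀| < 1/16)
    (h : t ∈ Metric.ball t₀ (1/16 - |t₀|)) : |Real.sin t| ≤ 1/16 := by
  rw [Metric.mem_ball, Real.dist_eq] at h
  have : |t| ≤ |t - t₀| + |t₀| := by
    calc |t| = |(t - t₀) + t₀| := by ring_nf
      _ ≤ _ := abs_add_le _ _
  exact le_trans (Real.abs_sin_le_abs) (by linarith)

lemma sin_pos_small {t : ℝ} (h : |Real.sin t| ≤ 1/16) : 0 < 1 + Real.sin t := by
  have := abs_le.1 h; linarith [this.1]

lemma zf_hasDeriv : HasDerivAt zf (zf t) t := by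
  exact hasDerivAt_const t (0:ℝ)

lemma hasDerivAt_psiN (hb0 : 0 < b) (hb1 : b ≤ 1) {t₀ : ℝ} (ht : |t₀| < 1/16) :
    HasDerivAt (psiN b) (psiN1 b t₀) t₀ := by
  apply hasDerivAt_param (C := 2 * (8 + 1/b)) (by linarith : (0:ℝ) < 1/16 - |t₀|)
  · intro t htb
    exact continuous_gg_u (abs_mmf_le (sin_small ht htb))
  · exact continuous_gg1_u (abs_mmf_le (sin_small ht (Metric.mem_ball_self (by linarith))))
  · intro u hu t htb
    have hsm := sin_small ht htb
    exact abs_gg1_le hu (abs_mmf_le hsm) (abs_mmf1_le hsm) (abs_ddf1_le hsm hb0 hb1)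
  · intro u hu t htb
    have hsm := sin_small ht htb
    exact hasDerivAt_gg (hasDerivAt_mmf (sin_pos_small hsm)) (hasDerivAt_ddf hb0 hb1)
      (by linarith [(BB_bounds (mf := mmf) (df := ddf b) (t := t) (u := u)
        (abs_mmf_le hsm)).1])

lemma hasDerivAt_psiN1 (hb0 : 0 < b) (hb1 : b ≤ 1) {t₀ : ℝ} (ht : |t₀| < 1/16) :
    HasDerivAt (psiN1 b) (psiN2 b t₀) t₀ := by
  apply hasDerivAt_param
    (C := 2 * (32 + 4 * 8 * (1/b) + (1/b)^2 + 6/b^3) + 6 * (8 + 1/b)^2)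
    (by linarith : (0:ℝ) < 1/16 - |t₀|)
  · intro t htb
    exact continuous_gg1_u (abs_mmf_le (sin_small ht htb))
  · exact continuous_gg2_u (abs_mmf_le (sin_small ht (Metric.mem_ball_self (by linarith))))
  · intro u hu t htb
    have hsm := sin_small ht htb
    exact abs_gg2_le hu (abs_mmf_le hsm) (abs_mmf1_le hsm) (abs_mmf2_le hsm)
      (abs_ddf1_le hsm hb0 hb1) (abs_ddf2_le hsm hb0 hb1)
  · intro u hu t htb
    have hsm := sin_small ht htb
    exact hasDerivAt_gg1 (hasDerivAt_mmf (sin_pos_small hsm))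
      (hasDerivAt_mmf1 (sin_pos_small hsm)) (hasDerivAt_ddf hb0 hb1)
      (hasDerivAt_ddf1 hb0 hb1)
      (by linarith [(BB_bounds (mf := mmf) (df := ddf b) (t := t) (u := u)
        (abs_mmf_le hsm)).1])

lemma zf_abs_le {c : ℝ} (hc : 0 ≤ c) : |zf t| ≤ c := by simp [zf, hc]

lemma hasDerivAt_psiD {t₀ : ℝ} (ht : |t₀| < 1/16) :
    HasDerivAt psiD (psiD1 t₀) t₀ := by
  apply hasDerivAt_param (C := 2 * (8 + 0)) (by linarith : (0:ℝ) < 1/16 - |t₀|)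
  · intro t htb
    exact continuous_gg_u (abs_mmf_le (sin_small ht htb))
  · exact continuous_gg1_u (abs_mmf_le (sin_small ht (Metric.mem_ball_self (by linarith))))
  · intro u hu t htb
    have hsm := sin_small ht htb
    exact abs_gg1_le hu (abs_mmf_le hsm) (abs_mmf1_le hsm) (zf_abs_le le_rfl)
  · intro u hu t htb
    have hsm := sin_small ht htb
    exact hasDerivAt_gg (hasDerivAt_mmf (sin_pos_small hsm)) zf_hasDeriv
      (by linarith [(BB_bounds (mf := mmf) (df := zf) (t := t) (u := u)
        (abs_mmf_le hsm)).1])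

lemma hasDerivAt_psiD1 {t₀ : ℝ} (ht : |t₀| < 1/16) :
    HasDerivAt psiD1 (psiD2 t₀) t₀ := by
  apply hasDerivAt_param (C := 2 * (32 + 4 * 8 * 0 + 0^2 + 0) + 6 * (8 + 0)^2)
    (by linarith : (0:ℝ) < 1/16 - |t₀|)
  · intro t htb
    exact continuous_gg1_u (abs_mmf_le (sin_small ht htb))
  · exact continuous_gg2_u (abs_mmf_le (sin_small ht (Metric.mem_ball_self (by linarith))))
  · intro u hu t htb
    have hsm := sin_small ht htb
    exact abs_gg2_le hu (abs_mmf_le hsm) (abs_mmf1_le hsm) (abs_mmf2_le hsm)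
      (zf_abs_le le_rfl) (zf_abs_le le_rfl)
  · intro u hu t htb
    have hsm := sin_small ht htb
    exact hasDerivAt_gg1 (hasDerivAt_mmf (sin_pos_small hsm))
      (hasDerivAt_mmf1 (sin_pos_small hsm)) zf_hasDeriv zf_hasDeriv
      (by linarith [(BB_bounds (mf := mmf) (df := zf) (t := t) (u := u)
        (abs_mmf_le hsm)).1])

end KolAux
-- Layer 6: values of psi at 0
namespace KolAux

variable {b : ℝ}

lemma pp_eq (d u : ℝ) : pp d u = (Real.pi/2 - d) * u + d/2 := by rw [pp]; ring

/-- `∫ u in 0..1, sin (pp d u) ^ 2 = 1/2` whenever `π/2 - d ≠ 0`. -/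
lemma int_sin_sq {d : ℝ} (hL : Real.pi/2 - d ≠ 0) :
    (∫ u in (0:ℝ)..1, Real.sin (pp d u) ^ 2) = 1/2 := by
  have h1 : (∫ u in (0:ℝ)..1, Real.sin (pp d u) ^ 2)
      = ∫ u in (0:ℝ)..1, (fun x => Real.sin x ^ 2) ((Real.pi/2 - d) * u + d/2) := by
    refine intervalIntegral.integral_congr fun u _ => ?_
    rw [pp_eq]
  rw [h1, intervalIntegral.integral_comp_mul_add (fun x => Real.sin x ^ 2) hL (d/2)]
  have hb1 : (Real.pi/2 - d) * 0 + d/2 = d/2 := by ring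
  have hb2 : (Real.pi/2 - d) * 1 + d/2 = Real.pi/2 - d/2 := by ring
  rw [hb1, hb2, integral_sin_sq]
  rw [Real.sin_pi_div_two_sub, Real.cos_pi_div_two_sub]
  rw [smul_eq_mul]
  have hkey : Real.sin (d/2) * Real.cos (d/2) - Real.cos (d/2) * Real.sin (d/2)
      + (Real.pi/2 - d/2) - d/2 = Real.pi/2 - d := by ring
  rw [hkey, show (Real.pi/2 - d)⁻¹ * ((Real.pi/2 - d)/2)
    = (Real.pi/2 - d) * (Real.pi/2 - d)⁻¹ / 2 by ring, mul_inv_cancel₀ hL]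
  try norm_num

/-- `∫ u in 0..1, sin (pp d u) ^ 4 = 3/8 - sin d * cos d / (8 * (π/2 - d))`. -/
lemma int_sin_pow4 {d : ℝ} (hL : Real.pi/2 - d ≠ 0) :
    (∫ u in (0:ℝ)..1, Real.sin (pp d u) ^ 4)
      = 3/8 - Real.sin d * Real.cos d / (8 * (Real.pi/2 - d)) := by
  have h1 : (∫ u in (0:ℝ)..1, Real.sin (pp d u) ^ 4)
      = ∫ u in (0:ℝ)..1, (fun x => Real.sin x ^ 4) ((Real.pi/2 - d) * u + d/2) := by
    refine intervalIntegral.integral_congr fun u _ => ?_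
    rw [pp_eq]
  rw [h1, intervalIntegral.integral_comp_mul_add (fun x => Real.sin x ^ 4) hL (d/2)]
  have hb1 : (Real.pi/2 - d) * 0 + d/2 = d/2 := by ring
  have hb2 : (Real.pi/2 - d) * 1 + d/2 = Real.pi/2 - d/2 := by ring
  rw [hb1, hb2]
  have h4 := integral_sin_pow 2 (a := d/2) (b := Real.pi/2 - d/2)
  norm_num at h4
  rw [h4]
  rw [Real.sin_pi_div_two_sub, Real.cos_pi_div_two_sub]
  have hsin : Real.sin d = 2 * Real.sin (d/2) * Real.cos (d/2) := by
    rw [show d = 2 * (d/2) by ring, Real.sin_two_mul]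
    ring_nf
  have hcos : Real.cos d = Real.cos (d/2) ^ 2 - Real.sin (d/2) ^ 2 := by
    rw [show d = 2 * (d/2) by ring, Real.cos_two_mul']
    ring_nf
  rw [smul_eq_mul, hsin, hcos]
  set L := Real.pi/2 - d with hLdef
  have hpi2 : Real.pi/2 = L + d := by rw [hLdef]; ring
  rw [hpi2]
  field_simp
  try ring

lemma BB_zero_N {u : ℝ} : BB mmf (ddf b) 0 u = 1 := by simp [BB, mmf_zero]
lemma BB_zero_D {u : ℝ} : BB mmf zf 0 u = 1 := by simp [BB, mmf_zero]

lemma psiN_zero : psiN b 0 = 1 := by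
  have : ∀ u : ℝ, gg mmf (ddf b) 0 u = 1 := fun u => by
    rw [gg, BB_zero_N, Real.sqrt_one, inv_one]
  rw [psiN]
  simp only [this]
  simp

lemma psiD_zero : psiD 0 = 1 := by
  have : ∀ u : ℝ, gg mmf zf 0 u = 1 := fun u => by
    rw [gg, BB_zero_D, Real.sqrt_one, inv_one]
  rw [psiD]
  simp only [this]
  simp

lemma gg1_zero_N {u : ℝ} :
    gg1 mmf mmf1 (ddf b) (ddf1 b) 0 u = 2 * Real.sin (pp (ddf b 0) u) ^ 2 := by
  rw [gg1, BB_zero_N, QQ, mmf_zero, mmf1_zero, ddf1_zero, Real.sqrt_one]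
  ring

lemma gg1_zero_D {u : ℝ} :
    gg1 mmf mmf1 zf zf 0 u = 2 * Real.sin (pp 0 u) ^ 2 := by
  rw [gg1, BB_zero_D, QQ, mmf_zero, mmf1_zero, Real.sqrt_one]
  simp only [zf]
  ring

lemma gg2_zero_N {u : ℝ} :
    gg2 mmf mmf1 mmf2 (ddf b) (ddf1 b) (ddf2 b) 0 u
      = 12 * Real.sin (pp (ddf b 0) u) ^ 4 - 8 * Real.sin (pp (ddf b 0) u) ^ 2 := by
  rw [gg2, BB_zero_N, QQ, QQ2, mmf_zero, mmf1_zero, mmf2_zero, ddf1_zero, Real.sqrt_one]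
  ring

lemma gg2_zero_D {u : ℝ} :
    gg2 mmf mmf1 mmf2 zf zf zf 0 u
      = 12 * Real.sin (pp 0 u) ^ 4 - 8 * Real.sin (pp 0 u) ^ 2 := by
  rw [gg2, BB_zero_D, QQ, QQ2, mmf_zero, mmf1_zero, mmf2_zero, Real.sqrt_one]
  simp only [zf]
  ring

lemma LL_zero_pos (hb0 : 0 < b) (hb1 : b < 1) : 0 < Real.pi/2 - ddf b 0 := by
  rw [ddf_zero]
  linarith [(ddf_zero_mem hb0 hb1).2]

lemma psiN1_zero (hb0 : 0 < b) (hb1 : b < 1) : psiN1 b 0 = 1 := by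
  rw [psiN1]
  simp only [gg1_zero_N]
  rw [intervalIntegral.integral_const_mul, int_sin_sq (ne_of_gt (LL_zero_pos hb0 hb1))]
  norm_num

lemma psiD1_zero : psiD1 0 = 1 := by
  rw [psiD1]
  simp only [gg1_zero_D]
  have hpi := Real.pi_pos
  rw [intervalIntegral.integral_const_mul,
    int_sin_sq (d := 0) (by linarith)]
  norm_num

lemma continuous_sin_pp_sq (d : ℝ) (n : ℕ) : Continuous fun u : ℝ => Real.sin (pp d u) ^ n := by
  simp only [pp]; fun_prop

lemma psiN2_zero (hb0 : 0 < b) (hb1 : b < 1) :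
    psiN2 b 0 = 1/2 - 3 * KK b * b / (2 * (Real.pi/2 - ddf b 0)) := by
  have hL := LL_zero_pos hb0 hb1
  rw [psiN2]
  simp only [gg2_zero_N]
  rw [intervalIntegral.integral_sub
    ((continuous_const.fun_mul (continuous_sin_pp_sq (ddf b 0) 4)).intervalIntegrable 0 1)
    ((continuous_const.fun_mul (continuous_sin_pp_sq (ddf b 0) 2)).intervalIntegrable 0 1),
    intervalIntegral.integral_const_mul, intervalIntegral.integral_const_mul,
    int_sin_sq (ne_of_gt hL), int_sin_pow4 (ne_of_gt hL)]
  rw [ddf_zero, sin_ddf_zero hb0 hb1.le, cos_ddf_zero hb0 hb1.le]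
  rw [ddf_zero] at hL
  set L := Real.pi/2 - Real.arcsin (KK b) with hLdef
  field_simp
  ring

lemma psiD2_zero : psiD2 0 = 1/2 := by
  have hpi := Real.pi_pos
  have hL : (0:ℝ) < Real.pi/2 - 0 := by linarith
  rw [psiD2]
  simp only [gg2_zero_D]
  rw [intervalIntegral.integral_sub
    ((continuous_const.fun_mul (continuous_sin_pp_sq 0 4)).intervalIntegrable 0 1)
    ((continuous_const.fun_mul (continuous_sin_pp_sq 0 2)).intervalIntegrable 0 1),
    intervalIntegral.integral_const_mul, intervalIntegral.integral_const_mul,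
    int_sin_sq (d := 0) (ne_of_gt hL), int_sin_pow4 (d := 0) (ne_of_gt hL)]
  norm_num

end KolAux
-- Layer 7: N, D, r, and the identity with F
namespace KolAux

def NN (b : ℝ) : ℝ → ℝ := fun t => (Real.pi/2 - ddf b t) * psiN b t
def NN1 (b : ℝ) : ℝ → ℝ := fun t => -ddf1 b t * psiN b t + (Real.pi/2 - ddf b t) * psiN1 b t
def DDf : ℝ → ℝ := fun t => Real.pi/2 * psiD t
def DD1f : ℝ → ℝ := fun t => Real.pi/2 * psiD1 t
def rr (b : ℝ) : ℝ → ℝ := fun t => (NN1 b t * DDf t - NN b t * DD1f t) / DDf t ^ 2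

variable {b t t₀ : ℝ}

lemma hasDerivAt_NN (hb0 : 0 < b) (hb1 : b < 1) (ht : |t| < 1/16) :
    HasDerivAt (NN b) (NN1 b t) t :=
  ((hasDerivAt_ddf hb0 hb1.le).const_sub (Real.pi/2)).mul (hasDerivAt_psiN hb0 hb1.le ht)

lemma hasDerivAt_DDf (ht : |t| < 1/16) : HasDerivAt DDf (DD1f t) t :=
  (hasDerivAt_psiD ht).const_mul (Real.pi/2)

lemma psiD_ge (ht : |Real.sin t| ≤ 1/16) : 1/2 ≤ psiD t := by
  have hm := abs_mmf_le ht
  have key : ∀ u ∈ Icc (0:ℝ) 1, (1:ℝ)/2 ≤ gg mmf zf t u := by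
    intro u _
    have hB := BB_bounds (mf := mmf) (df := zf) (t := t) (u := u) hm
    have hs4 : Real.sqrt (BB mmf zf t u) ≤ 2 := by
      rw [show (2:ℝ) = Real.sqrt 4 by
        rw [show (4:ℝ) = 2^2 by norm_num, Real.sqrt_sq (by norm_num : (0:ℝ) ≤ 2)]]
      exact Real.sqrt_le_sqrt (by linarith [hB.2])
    have hspos : 0 < Real.sqrt (BB mmf zf t u) :=
      lt_of_lt_of_le (by norm_num) (sqrtBB_ge (df := zf) (u := u) hm)
    rw [gg, show (1:ℝ)/2 = 2⁻¹ by norm_num]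
    exact inv_anti₀ hspos hs4
  have h2 : (1:ℝ)/2 = ∫ _u in (0:ℝ)..1, (1/2 : ℝ) := by simp
  rw [psiD, h2]
  apply intervalIntegral.integral_mono_on (by norm_num) intervalIntegrable_const
    ((continuous_gg_u hm).intervalIntegrable 0 1)
  exact key

lemma DDf_pos (ht : |Real.sin t| ≤ 1/16) : 0 < DDf t := by
  have := psiD_ge ht
  have hpi := Real.pi_pos
  rw [DDf]; nlinarith

lemma hasDerivAt_rhoHat (hb0 : 0 < b) (hb1 : b < 1) (ht : |t| < 1/16) :
    HasDerivAt (fun t => NN b t / DDf t) (rr b t) t :=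
  (hasDerivAt_NN hb0 hb1 ht).div (hasDerivAt_DDf ht)
    (ne_of_gt (DDf_pos (le_trans Real.abs_sin_le_abs ht.le)))

-- the integrand as a function of θ
lemma base_pos (hm : |mmf t| ≤ 1/2) (θ : ℝ) : 0 < 1 - mmf t * Real.sin θ ^ 2 := by
  have h1 := Real.sin_sq_le_one θ
  have h2 := sq_nonneg (Real.sin θ)
  have := abs_le.1 hm
  nlinarith [this.1, this.2]

lemma integrand_eq (hm : |mmf t| ≤ 1/2) (θ : ℝ) :
    (1 - mmf t * Real.sin θ ^ 2) ^ (-(1:ℝ)/2)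
      = (Real.sqrt (1 - mmf t * Real.sin θ ^ 2))⁻¹ := by
  rw [show (-(1:ℝ)/2) = -(1/2 : ℝ) by norm_num,
    Real.rpow_neg (base_pos hm θ).le, Real.sqrt_eq_rpow]

lemma continuous_integrand (hm : |mmf t| ≤ 1/2) :
    Continuous fun θ => (Real.sqrt (1 - mmf t * Real.sin θ ^ 2))⁻¹ := by
  apply Continuous.inv₀ (by fun_prop)
  intro θ
  exact ne_of_gt (Real.sqrt_pos.2 (base_pos hm θ))

lemma ddf_lt (hb0 : 0 < b) (hb1 : b < 1) : ddf b t < Real.pi/2 := by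
  rw [ddf]
  exact Real.arcsin_lt_pi_div_two.2
    (lt_of_le_of_lt (wwf_le_KK hb0 hb1.le) (KK_lt_one hb0 hb1.le))

lemma F_diff_eq (hb0 : 0 < b) (hb1 : b < 1) (hsm : |Real.sin t| ≤ 1/16) :
    (∫ θ in (0:ℝ)..(Real.pi/2 - ddf b t/2), (1 - mmf t * Real.sin θ ^ 2) ^ (-(1:ℝ)/2))
      - (∫ θ in (0:ℝ)..(ddf b t/2), (1 - mmf t * Real.sin θ ^ 2) ^ (-(1:ℝ)/2))
      = NN b t := by
  have hm := abs_mmf_le hsm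
  have hL : Real.pi/2 - ddf b t ≠ 0 := ne_of_gt (by linarith [ddf_lt (t := t) hb0 hb1])
  set h : ℝ → ℝ := fun θ => (Real.sqrt (1 - mmf t * Real.sin θ ^ 2))⁻¹ with hh
  have hint : ∀ α : ℝ, (∫ θ in (0:ℝ)..α, (1 - mmf t * Real.sin θ ^ 2) ^ (-(1:ℝ)/2))
      = ∫ θ in (0:ℝ)..α, h θ := by
    intro α
    exact intervalIntegral.integral_congr fun θ _ => integrand_eq hm θ
  rw [hint, hint]
  have hIab : ∀ x y : ℝ, IntervalIntegrable h MeasureTheory.volume x y :=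
    fun x y => (continuous_integrand hm).intervalIntegrable x y
  rw [intervalIntegral.integral_interval_sub_left (hIab 0 _) (hIab 0 _)]
  have hcv := intervalIntegral.smul_integral_comp_mul_add (a := (0:ℝ)) (b := 1)
    (f := h) (Real.pi/2 - ddf b t) (ddf b t/2)
  have hpsi : (∫ u in (0:ℝ)..1, h ((Real.pi/2 - ddf b t) * u + ddf b t/2)) = psiN b t := by
    refine intervalIntegral.integral_congr fun u _ => ?_
    rw [← pp_eq]
    simp only [hh, gg, BB, psiN]
  rw [hpsi] at hcv
  have e1 : (Real.pi/2 - ddf b t) * 0 + ddf b t/2 = ddf b t/2 := by ring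
  have e2 : (Real.pi/2 - ddf b t) * 1 + ddf b t/2 = Real.pi/2 - ddf b t/2 := by ring
  rw [e1, e2] at hcv
  simp only [NN]
  rw [← smul_eq_mul, hcv]

lemma F_pi_eq (hsm : |Real.sin t| ≤ 1/16) :
    (∫ θ in (0:ℝ)..(Real.pi/2), (1 - mmf t * Real.sin θ ^ 2) ^ (-(1:ℝ)/2)) = DDf t := by
  have hm := abs_mmf_le hsm
  set h : ℝ → ℝ := fun θ => (Real.sqrt (1 - mmf t * Real.sin θ ^ 2))⁻¹ with hh
  have hint : (∫ θ in (0:ℝ)..(Real.pi/2), (1 - mmf t * Real.sin θ ^ 2) ^ (-(1:ℝ)/2))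
      = ∫ θ in (0:ℝ)..(Real.pi/2), h θ :=
    intervalIntegral.integral_congr fun θ _ => integrand_eq hm θ
  rw [hint]
  have hcv := intervalIntegral.smul_integral_comp_mul_add (a := (0:ℝ)) (b := 1)
    (f := h) (Real.pi/2) 0
  have hpsi : (∫ u in (0:ℝ)..1, h (Real.pi/2 * u + 0)) = psiD t := by
    refine intervalIntegral.integral_congr fun u _ => ?_
    have : Real.pi/2 * u + 0 = pp (zf t) u := by simp only [pp, zf]; ring
    rw [this]
    simp only [hh, gg, BB, psiD]
  rw [hpsi] at hcv
  have e1 : Real.pi/2 * 0 + (0:ℝ) = 0 := by ring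
  have e2 : Real.pi/2 * 1 + (0:ℝ) = Real.pi/2 := by ring
  rw [e1, e2] at hcv
  simp only [DDf]
  rw [← smul_eq_mul, hcv]

lemma rr_zero (hb0 : 0 < b) (hb1 : b < 1) : rr b 0 = 0 := by
  have hpi := Real.pi_ne_zero
  simp only [rr, NN, NN1, DDf, DD1f, psiN_zero, psiN1_zero hb0 hb1, psiD_zero,
    psiD1_zero, ddf1_zero]
  ring

lemma hasDerivAt_rr_zero (hb0 : 0 < b) (hb1 : b < 1) :
    HasDerivAt (rr b) (KK b * b / Real.pi) 0 := by
  have h016 : |(0:ℝ)| < 1/16 := by norm_num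
  have hsin0 : |Real.sin (0:ℝ)| ≤ 1/16 := by simp
  have hN := hasDerivAt_NN hb0 hb1 h016
  have hD := hasDerivAt_DDf h016
  have hpsiN := hasDerivAt_psiN hb0 hb1.le h016
  have hpsiN1 := hasDerivAt_psiN1 hb0 hb1.le h016
  have hpsiD1 := hasDerivAt_psiD1 h016
  have hddf := hasDerivAt_ddf (t := (0:ℝ)) hb0 hb1.le
  have hddf1 := hasDerivAt_ddf1 (t := (0:ℝ)) hb0 hb1.le
  have hN1 : HasDerivAt (NN1 b)
      ((-(ddf2 b 0)) * psiN b 0 + (-ddf1 b 0) * psiN1 b 0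
        + ((-ddf1 b 0) * psiN1 b 0 + (Real.pi/2 - ddf b 0) * psiN2 b 0)) 0 :=
    ((hddf1.neg.mul hpsiN).add ((hddf.const_sub (Real.pi/2)).mul hpsiN1))
  have hD1 : HasDerivAt DD1f (Real.pi/2 * psiD2 0) 0 := hpsiD1.const_mul (Real.pi/2)
  have hU := (hN1.mul hD).sub (hN.mul hD1)
  have hV := hD.pow 2
  have hDpos := DDf_pos (t := (0:ℝ)) hsin0
  have hr := hU.div hV (by simp only [Pi.pow_apply]; positivity)
  refine hr.congr_deriv ?_
  simp only [NN, NN1, DDf, DD1f, Pi.pow_apply, Pi.mul_apply, Pi.sub_apply]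
  rw [psiN_zero, psiN1_zero hb0 hb1, psiN2_zero hb0 hb1, psiD_zero, psiD1_zero,
    psiD2_zero, ddf1_zero, ddf2_zero hb0 hb1.le, ddf_zero]
  norm_num
  have hL : 0 < Real.pi/2 - Real.arcsin (KK b) := by
    have := LL_zero_pos hb0 hb1
    rwa [ddf_zero] at this
  have hpi := Real.pi_pos
  set L := Real.pi/2 - Real.arcsin (KK b) with hLdef
  field_simp
  ring

end KolAux
end KolAux

open KolAux in
/-- the first two one-sided derivatives at `t = 0` of Kołodziej's rotation
number `ρ(t)` of the squared billiard map in the ellipse `x²/b² + y² = 1` along the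
family of hyperbolic caustics: `ρ'(0⁺) = 0` and `ρ''(0⁺) = b√(1 - b²)/π`. -/
theorem kolodziej_rotation_derivs_one_two (b : ℝ) (hb0 : 0 < b) (hb1 : b < 1 / Real.sqrt 2)
    (F : ℝ → ℝ → ℝ)
    (hF : ∀ α m : ℝ, F α m = ∫ θ in (0:ℝ)..α, (1 - m * Real.sin θ ^ 2) ^ (-(1:ℝ) / 2))
    (m δ ρ : ℝ → ℝ)
    (hm : ∀ t, m t = 4 * Real.sin t / (1 + Real.sin t) ^ 2)
    (hδ : ∀ t, δ t = Real.arcsin (Real.sqrt (1 - b ^ 2) * (1 - Real.sin t ^ 2)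
      / (1 - (1 - b ^ 2) * Real.sin t ^ 2)))
    (hρ : ∀ t, ρ t = (F (Real.pi / 2 - δ t / 2) (m t) - F (δ t / 2) (m t))
      / F (Real.pi / 2) (m t)) :
    iteratedDerivWithin 1 ρ (Set.Ici 0) 0 = 0 ∧
    iteratedDerivWithin 2 ρ (Set.Ici 0) 0 = b * Real.sqrt (1 - b ^ 2) / Real.pi := by
  have hsqrt2 : 1 < Real.sqrt 2 := by
    nlinarith [Real.sq_sqrt (by norm_num : (0:ℝ) ≤ 2), Real.sqrt_nonneg 2]
  have hb1' : b < 1 := lt_trans hb1 (by rw [div_lt_one (by linarith)]; exact hsqrt2)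
  have hρeq : ∀ t : ℝ, |t| < 1/16 → ρ t = NN b t / DDf t := by
    intro t ht
    have hsm : |Real.sin t| ≤ 1/16 := le_trans Real.abs_sin_le_abs ht.le
    have hδt : δ t = ddf b t := by
      rw [hδ t]; simp only [ddf, wwf, Dw]
    have hmt : m t = mmf t := by rw [hm t]; rfl
    rw [hρ t, hF, hF, hF, hδt, hmt]
    rw [F_diff_eq hb0 hb1' hsm, F_pi_eq hsm]
  have hDer : ∀ t : ℝ, |t| < 1/16 → HasDerivAt ρ (rr b t) t := by
    intro t ht
    apply (hasDerivAt_rhoHat hb0 hb1' ht).congr_of_eventuallyEq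
    have hball : Metric.ball (0:ℝ) (1/16) ∈ nhds t := by
      apply Metric.isOpen_ball.mem_nhds
      simpa [Real.dist_eq] using ht
    exact Filter.eventuallyEq_of_mem hball fun x hx =>
      hρeq x (by simpa [Real.dist_eq] using hx)
  have hUD : UniqueDiffWithinAt ℝ (Set.Ici (0:ℝ)) 0 := uniqueDiffOn_Ici 0 0 Set.self_mem_Ici
  have hd1 : derivWithin ρ (Set.Ici 0) 0 = rr b 0 :=
    ((hDer 0 (by norm_num)).hasDerivWithinAt).derivWithin hUD
  constructor
  · rw [iteratedDerivWithin_one, hd1, rr_zero hb0 hb1']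
  · rw [show (2:ℕ) = 1 + 1 from rfl, iteratedDerivWithin_succ]
    have hev : iteratedDerivWithin 1 ρ (Set.Ici 0) =ᶠ[nhdsWithin 0 (Set.Ici 0)] rr b := by
      have h1 : ∀ᶠ x in nhdsWithin (0:ℝ) (Set.Ici 0), x ∈ Metric.ball (0:ℝ) (1/16) :=
        Filter.Eventually.filter_mono nhdsWithin_le_nhds
          (Filter.eventually_of_mem (Metric.ball_mem_nhds 0 (by norm_num)) fun x hx => hx)
      have h2 : ∀ᶠ x in nhdsWithin (0:ℝ) (Set.Ici 0), x ∈ Set.Ici (0:ℝ) :=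
        Filter.eventually_of_mem self_mem_nhdsWithin fun x hx => hx
      filter_upwards [h1, h2] with x hx1 hx2
      have hu : UniqueDiffWithinAt ℝ (Set.Ici (0:ℝ)) x := uniqueDiffOn_Ici 0 x hx2
      rw [iteratedDerivWithin_one]
      exact ((hDer x (by simpa [Real.dist_eq] using hx1)).hasDerivWithinAt).derivWithin hu
    have h0 : iteratedDerivWithin 1 ρ (Set.Ici 0) 0 = rr b 0 := by
      rw [iteratedDerivWithin_one]; exact hd1
    rw [hev.derivWithin_eq h0]
    have := ((hasDerivAt_rr_zero hb0 hb1').hasDerivWithinAt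
      (s := Set.Ici (0:ℝ))).derivWithin hUD
    rw [this, KK]
    ring
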